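/- Let V be a variety of a plural similarity type τ, and let B be a variety of Ω-bands of the same type. Let f(x,y) and g(x,y) be binary terms, each containing both variables x and y, such that f and g have the same first variable and the same last variable. If V satisfies the identities f(x,y) = x and g(x,y) = y, then the Mal'tsev product V ∘ B is a variety. -/

import Mathlib

structure Signature where
  symbols : Type
  arity : symbols → ℕ

structure Alg (S : Signature) where
  carrier : Type
  op : ∀ ω : S.symbols, (Fin (S.arity ω) → carrier) → carrier
  nonempty : Nonempty carrier

inductive Term (S : Signature) (X : Type) : Type
  | var : X → Term S X
  | app : ∀ ω : S.symbols, (Fin (S.arity ω) → Term S X) → Term S X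

def Term.eval {S : Signature} {X : Type} (A : Alg S) (env : X → A.carrier) :
    Term S X → A.carrier
  | .var x => env x
  | .app ω ts => A.op ω fun i => (ts i).eval A env

/-- The algebra `A` satisfies the identity `u = v`. -/
def Alg.sat {S : Signature} (A : Alg S) {X : Type} (u v : Term S X) : Prop :=
  ∀ env : X → A.carrier, u.eval A env = v.eval A env

/-- An identity: a pair of terms in the countably many variables `x₀, x₁, …`. -/
abbrev Ident (S : Signature) := Term S ℕ × Term S ℕ

/-- `A` lies in the variety axiomatized by the set of identities `E`. -/
def Alg.Models {S : Signature} (A : Alg S) (E : Set (Ident S)) : Prop :=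
  ∀ e ∈ E, A.sat e.1 e.2

/-- The identity `u = v` holds in the variety axiomatized by `E`. -/
def Conseq {S : Signature} (E : Set (Ident S)) {X : Type} (u v : Term S X) : Prop :=
  ∀ A : Alg S, A.Models E → A.sat u v

/-- `a` is an idempotent element of `A`. -/
def Alg.IsIdem {S : Signature} (A : Alg S) (a : A.carrier) : Prop :=
  ∀ ω : S.symbols, A.op ω (fun _ => a) = a

/-- `B` is (the universe of) a subalgebra of `A`. -/
def Alg.IsSubuniverse {S : Signature} (A : Alg S) (B : Set A.carrier) : Prop :=
  ∀ ω (a : Fin (S.arity ω) → A.carrier), (∀ i, a i ∈ B) → A.op ω a ∈ B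

/-- The subalgebra of `A` on a nonempty subuniverse `B`. -/
def Alg.subAlg {S : Signature} (A : Alg S) (B : Set A.carrier)
    (h : A.IsSubuniverse B) (hne : B.Nonempty) : Alg S where
  carrier := B
  op ω a := ⟨A.op ω fun i => (a i : A.carrier), h ω _ fun i => (a i).2⟩
  nonempty := hne.to_subtype

/-- A congruence of `A`: an equivalence relation compatible with all operations. -/
structure Congruence {S : Signature} (A : Alg S) where
  rel : A.carrier → A.carrier → Prop
  iseqv : Equivalence rel
  compat : ∀ ω (a b : Fin (S.arity ω) → A.carrier),
    (∀ i, rel (a i) (b i)) → rel (A.op ω a) (A.op ω b)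

def Congruence.setoid {S : Signature} {A : Alg S} (θ : Congruence A) :
    Setoid A.carrier := ⟨θ.rel, θ.iseqv⟩

/-- The quotient algebra `A/θ`. -/
noncomputable def Alg.quot {S : Signature} (A : Alg S) (θ : Congruence A) : Alg S where
  carrier := Quotient θ.setoid
  op ω q := Quotient.mk θ.setoid (A.op ω fun i => (q i).out)
  nonempty := A.nonempty.map (Quotient.mk θ.setoid)

/-- Membership in the Mal'tsev product of the varieties axiomatized by `V` and `W`:
`A` has a congruence `θ` with `A/θ` in (the variety of) `W` such that every
`θ`-class which is a subalgebra of `A` is an algebra in (the variety of) `V`. -/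
def InMaltsev {S : Signature} (V W : Set (Ident S)) (A : Alg S) : Prop :=
  ∃ θ : Congruence A, (A.quot θ).Models W ∧
    ∀ a : A.carrier, ∀ h : A.IsSubuniverse {b | θ.rel a b},
      (A.subAlg {b | θ.rel a b} h ⟨a, θ.iseqv.refl a⟩).Models V

/-- A class of algebras is a variety iff it is axiomatized by some set of identities. -/
def IsVarietyClass {S : Signature} (K : Alg S → Prop) : Prop :=
  ∃ E : Set (Ident S), ∀ A : Alg S, K A ↔ A.Models E

/-- `listProd mul x [y₁,…,yₖ] = x · y₁ · … · yₖ` (left-associated). -/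
def listProd {α : Type} (mul : α → α → α) : α → List α → α
  | x, [] => x
  | x, y :: l => listProd mul (mul x y) l

/-- `A` is an Ω-band: there is an associative idempotent binary operation `mul`
on `A` such that every (at least unary) basic operation of `A` is given by
`ω(x₁,…,xₙ) = x₁ · … · xₙ` (in particular `ω(x) = x` for unary `ω`). -/
def Alg.IsOmegaBand {S : Signature} (A : Alg S) : Prop :=
  ∃ mul : A.carrier → A.carrier → A.carrier,
    (∀ x, mul x x = x) ∧
    (∀ x y z, mul (mul x y) z = mul x (mul y z)) ∧
    ∀ (ω : S.symbols) (a : Fin (S.arity ω) → A.carrier) (h : 0 < S.arity ω),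
      A.op ω a = listProd mul (a ⟨0, h⟩) (List.ofFn a).tail

/-- The list of variables of a term in order of occurrence (with repetitions);
its head is the first variable of the term and its last entry the last
variable. -/
def Term.varList {S : Signature} {X : Type} : Term S X → List X
  | .var x => [x]
  | .app ω ts => (List.finRange (S.arity ω)).flatMap fun i => (ts i).varList

section AuxTerm

variable {S : Signature} {X Y : Type}

def Term.subst (σ : X → Term S Y) : Term S X → Term S Y
  | .var x => σ x
  | .app ω ts => .app ω fun i => (ts i).subst σ

theorem Term.eval_subst (A : Alg S) (σ : X → Term S Y) (e : Y → A.carrier) :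
    ∀ t : Term S X, (t.subst σ).eval A e = t.eval A fun x => (σ x).eval A e
  | .var x => rfl
  | .app ω ts => by
      show A.op ω _ = A.op ω _
      exact congrArg _ (funext fun i => Term.eval_subst A σ e (ts i))

theorem Term.eval_congr (A : Alg S) {e₁ e₂ : X → A.carrier} :
    ∀ t : Term S X, (∀ x ∈ t.varList, e₁ x = e₂ x) → t.eval A e₁ = t.eval A e₂
  | .var x, h => h x (by simp [Term.varList])
  | .app ω ts, h => by
      show A.op ω _ = A.op ω _
      refine congrArg _ (funext fun i => Term.eval_congr A (ts i) fun x hx => h x ?_)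
      simp only [Term.varList, List.mem_flatMap]
      exact ⟨i, List.mem_finRange i, hx⟩

theorem Term.varList_mem (h0 : ∀ ω : S.symbols, 0 < S.arity ω) :
    ∀ t : Term S X, ∃ x, x ∈ t.varList
  | .var x => ⟨x, by simp [Term.varList]⟩
  | .app ω ts => by
      obtain ⟨x, hx⟩ := Term.varList_mem h0 (ts ⟨0, h0 ω⟩)
      refine ⟨x, ?_⟩
      simp only [Term.varList, List.mem_flatMap]
      exact ⟨_, List.mem_finRange _, hx⟩

theorem conseq_symm {E : Set (Ident S)} {u v : Term S X} (h : Conseq E u v) :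
    Conseq E v u := fun A hA env => (h A hA env).symm

theorem conseq_subst {E : Set (Ident S)} {u v : Term S X} (h : Conseq E u v)
    {σ τ : X → Term S Y} (hστ : ∀ x, Conseq E (σ x) (τ x)) :
    Conseq E (u.subst σ) (v.subst τ) := by
  intro A hA env
  rw [Term.eval_subst, Term.eval_subst]
  have hh : (fun x => (σ x).eval A env) = fun x => (τ x).eval A env :=
    funext fun x => hστ x A hA env
  rw [hh]
  exact h A hA _

end AuxTerm
section AuxBand

variable {α : Type} (m : α → α → α)

/-- product of a nonempty list (default `d` for the empty list) -/
def prodOf (d : α) : List α → α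
  | [] => d
  | x :: l => listProd m x l

variable (idem : ∀ a, m a a = a) (assoc : ∀ a b c, m (m a b) c = m a (m b c))
include idem assoc

omit idem in
theorem lp_mp : ∀ (l : List α) (a x : α), listProd m (m a x) l = m a (listProd m x l)
  | [], _, _ => rfl
  | y :: l, a, x => by
      show listProd m (m (m a x) y) l = m a (listProd m (m x y) l)
      rw [assoc, lp_mp l]

omit idem assoc in
theorem lp_append : ∀ (l₁ l₂ : List α) (a : α),
    listProd m a (l₁ ++ l₂) = listProd m (listProd m a l₁) l₂
  | [], _, _ => rfl
  | x :: l₁, l₂, a => lp_append l₁ l₂ (m a x)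

theorem lp_const : ∀ (l : List α) (x c : α), l ≠ [] → (∀ y ∈ l, y = c) →
    listProd m x l = m x c
  | [], _, _, h, _ => absurd rfl h
  | y :: l, x, c, _, hc => by
      have hy : y = c := hc y (by simp)
      subst hy
      show listProd m (m x y) l = m x y
      cases l with
      | nil => rfl
      | cons z l' =>
        rw [lp_const (z :: l') (m x y) y (by simp)
          (fun a ha => (hc a (by simp [ha]))), assoc, idem]

omit idem assoc in
theorem prodOf_concat (d : α) : ∀ (l : List α) (y : α), l ≠ [] →
    prodOf m d (l ++ [y]) = m (prodOf m d l) y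
  | [], _, h => absurd rfl h
  | x :: l, y, _ => by
      show listProd m x (l ++ [y]) = m (listProd m x l) y
      rw [lp_append m l [y] x]
      rfl

theorem band_I3 (u c v : α) :
    m (m (m (m u c) v) c) (m (m u c) v) = m (m u c) v := by
  set z := m (m u c) v with hz
  have hz' : z = m u (m c v) := by rw [hz, assoc]
  have h1 : m (m z c) v = z := by
    rw [assoc z c v, hz', assoc u (m c v) (m c v), idem (m c v)]
  calc m (m z c) z = m (m z c) (m (m z c) v) := by rw [h1]
    _ = m (m (m z c) (m z c)) v := (assoc _ _ _).symm
    _ = m (m z c) v := by rw [idem]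
    _ = z := h1

theorem band_I3' (u c : α) : m (m (m u c) c) (m u c) = m u c := by
  have h : m (m u c) c = m u c := by rw [assoc, idem]
  rw [h, idem]

theorem absorb_factor : ∀ (l : List α) (x c : α), (c = x ∨ c ∈ l) →
    m (m (listProd m x l) c) (listProd m x l) = listProd m x l := by
  intro l x c hc
  rcases hc with rfl | hmem
  · cases l with
    | nil => show m (m c c) c = c; rw [idem, idem]
    | cons y l' =>
      have h1 : listProd m c (y :: l') = m (m c c) (listProd m y l') := by
        rw [idem]
        exact lp_mp m assoc l' c y
      rw [h1]
      exact band_I3 m idem assoc c c (listProd m y l')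
  · obtain ⟨l₁, l₂, rfl⟩ := List.append_of_mem hmem
    rw [lp_append m l₁ (c :: l₂) x]
    set u := listProd m x l₁ with hu
    cases l₂ with
    | nil => exact band_I3' m idem assoc u c
    | cons y l₂' =>
      have h1 : listProd m u (c :: y :: l₂') = m (m u c) (listProd m y l₂') := by
        show listProd m (m u c) (y :: l₂') = _
        exact lp_mp m assoc l₂' (m u c) y
      rw [h1]
      exact band_I3 m idem assoc u c (listProd m y l₂')

end AuxBand
section AuxBand2

variable {α : Type} (m : α → α → α)
variable (idem : ∀ a, m a a = a) (assoc : ∀ a b c, m (m a b) c = m a (m b c))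

/-- normal form of a two-letter band word with head `i` and last letter `j` -/
def nf2 (φ : Fin 2 → α) (i j : Fin 2) : α :=
  if i = j then m (m (φ i) (φ (if i = 0 then 1 else 0))) (φ i) else m (φ i) (φ j)

theorem nf2_00 (φ : Fin 2 → α) : nf2 m φ 0 0 = m (m (φ 0) (φ 1)) (φ 0) := rfl
theorem nf2_01 (φ : Fin 2 → α) : nf2 m φ 0 1 = m (φ 0) (φ 1) := rfl
theorem nf2_10 (φ : Fin 2 → α) : nf2 m φ 1 0 = m (φ 1) (φ 0) := rfl
theorem nf2_11 (φ : Fin 2 → α) : nf2 m φ 1 1 = m (m (φ 1) (φ 0)) (φ 1) := rfl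

include idem assoc

theorem nf2_step (φ : Fin 2 → α) (p q r : Fin 2) :
    m (nf2 m φ p q) (φ r) = nf2 m φ p r := by
  have h2 : ∀ x y : α, m (m x y) y = m x y := fun x y => by rw [assoc, idem]
  have h3 : ∀ x y : α, m (m (m x y) x) x = m (m x y) x := fun x y => by
    rw [assoc (m x y) x x, idem]
  have h4 : ∀ x y : α, m (m (m x y) x) y = m x y := fun x y => by
    rw [assoc (m x y) x y, idem]
  have hp := (by omega : p = 0 ∨ p = 1)
  have hq := (by omega : q = 0 ∨ q = 1)
  have hr := (by omega : r = 0 ∨ r = 1)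
  rcases hp with rfl | rfl <;> rcases hq with rfl | rfl <;> rcases hr with rfl | rfl <;>
    simp only [nf2, if_pos, if_neg, reduceIte, Fin.isValue] <;>
    first
      | exact h3 _ _
      | exact h4 _ _
      | exact h2 _ _
      | rfl

theorem lemC (φ : Fin 2 → α) (d : α) :
    ∀ (w : List (Fin 2)), (0 : Fin 2) ∈ w → (1 : Fin 2) ∈ w →
      ∀ p q : Fin 2, w.head? = some p → w.getLast? = some q →
      prodOf m d (w.map φ) = nf2 m φ p q := by
  intro w
  induction w using List.reverseRecOn with
  | nil => intro h; simp at h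
  | append_singleton w' dl ih =>
    intro h0w h1w p q hp hq
    have hq' : dl = q := by
      rw [List.getLast?_concat] at hq; exact Option.some.inj hq
    rw [hq'] at h0w h1w hp ⊢
    clear hq hq'
    by_cases hboth : (0 : Fin 2) ∈ w' ∧ (1 : Fin 2) ∈ w'
    · have hw' : w' ≠ [] := List.ne_nil_of_mem hboth.1
      obtain ⟨b, t, rfl⟩ : ∃ b t, w' = b :: t := by
        cases w' with
        | nil => exact absurd rfl hw'
        | cons b t => exact ⟨b, t, rfl⟩
      have hpb : p = b := by
        rw [List.cons_append] at hp
        exact (Option.some.inj hp).symm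
      subst hpb
      obtain ⟨q', hq'⟩ : ∃ q', (p :: t).getLast? = some q' :=
        ⟨_, List.getLast?_eq_getLast hw'⟩
      have hrec := ih hboth.1 hboth.2 p q' rfl hq'
      rw [List.map_append, List.map_singleton,
        prodOf_concat m d _ (φ q) (by simp : (p :: t).map φ ≠ [])]
      rw [hrec]
      exact nf2_step m idem assoc φ p q' q
    · -- w' contains at most one letter
      have hw'ne : w' ≠ [] := by
        rintro rfl
        simp only [List.nil_append, List.mem_singleton] at h0w h1w
        omega
      obtain ⟨b, t, rfl⟩ : ∃ b t, w' = b :: t := by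
        cases w' with
        | nil => exact absurd rfl hw'ne
        | cons b t => exact ⟨b, t, rfl⟩
      have hpb : p = b := by
        rw [List.cons_append] at hp
        exact (Option.some.inj hp).symm
      subst hpb
      have hall : ∃ a : Fin 2, ∀ x ∈ p :: t, x = a := by
        by_cases h0' : (0 : Fin 2) ∈ p :: t
        · refine ⟨0, fun x hx => ?_⟩
          have hx2 : x = 0 ∨ x = 1 := by omega
          rcases hx2 with rfl | rfl
          · rfl
          · exact absurd ⟨h0', hx⟩ hboth
        · refine ⟨1, fun x hx => ?_⟩
          have hx2 : x = 0 ∨ x = 1 := by omega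
          rcases hx2 with rfl | rfl
          · exact absurd hx h0'
          · rfl
      obtain ⟨a, ha⟩ := hall
      have hap : ∀ x ∈ p :: t, x = p := fun x hx =>
        (ha x hx).trans (ha p (by simp)).symm
      have hqp : q ≠ p := by
        rintro rfl
        have h00 : (0 : Fin 2) = q := by
          rcases List.mem_append.mp h0w with h | h
          · exact hap _ h
          · simpa using h
        have h11 : (1 : Fin 2) = q := by
          rcases List.mem_append.mp h1w with h | h
          · exact hap _ h
          · simpa using h
        omega
      rw [List.map_append, List.map_singleton,
        prodOf_concat m d _ (φ q) (by simp)]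
      have hconst : prodOf m d ((p :: t).map φ) = φ p := by
        show listProd m (φ p) (t.map φ) = φ p
        cases hT : t.map φ with
        | nil => rfl
        | cons z T' =>
          rw [← hT, lp_const m idem assoc (t.map φ) (φ p) (φ p)
            (by rw [hT]; simp)
            (fun y hy => by
              obtain ⟨x, hx, rfl⟩ := List.mem_map.mp hy
              rw [hap x (by simp [hx])]), idem]
      rw [hconst]
      show m (φ p) (φ q) = nf2 m φ p q
      rw [nf2, if_neg (fun hh => hqp hh.symm)]

theorem keyband (z c : α) (habs : m (m z c) z = z)
    (wf wg : List (Fin 2))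
    (h0f : (0 : Fin 2) ∈ wf) (h1f : (1 : Fin 2) ∈ wf)
    (h0g : (0 : Fin 2) ∈ wg) (h1g : (1 : Fin 2) ∈ wg)
    (p q : Fin 2)
    (hpf : wf.head? = some p) (hpg : wg.head? = some p)
    (hqf : wf.getLast? = some q) (hqg : wg.getLast? = some q) (d : α) :
    prodOf m d (wf.map ![prodOf m d (wg.map ![z, c]), z]) = z := by
  have hgv := lemC m idem assoc ![z, c] d wg h0g h1g p q hpg hqg
  have hfv := lemC m idem assoc ![prodOf m d (wg.map ![z, c]), z] d wf h0f h1f p q hpf hqf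
  rw [hfv]
  have hp2 := (by omega : p = 0 ∨ p = 1)
  have hq2 := (by omega : q = 0 ∨ q = 1)
  rcases hp2 with rfl | rfl <;> rcases hq2 with rfl | rfl
  · have hzz : prodOf m d (wg.map ![z, c]) = z := by
      rw [hgv, nf2_00]
      simp only [Matrix.cons_val_zero, Matrix.cons_val_one, Matrix.head_cons]
      exact habs
    rw [nf2_00]
    simp only [Matrix.cons_val_zero, Matrix.cons_val_one, Matrix.head_cons, hzz]
    rw [idem, idem]
  · have hzz : prodOf m d (wg.map ![z, c]) = m z c := by
      rw [hgv, nf2_01]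
      simp only [Matrix.cons_val_zero, Matrix.cons_val_one, Matrix.head_cons]
    rw [nf2_01]
    simp only [Matrix.cons_val_zero, Matrix.cons_val_one, Matrix.head_cons, hzz]
    exact habs
  · have hzz : prodOf m d (wg.map ![z, c]) = m c z := by
      rw [hgv, nf2_10]
      simp only [Matrix.cons_val_zero, Matrix.cons_val_one, Matrix.head_cons]
    rw [nf2_10]
    simp only [Matrix.cons_val_zero, Matrix.cons_val_one, Matrix.head_cons, hzz]
    rw [← assoc]
    exact habs
  · have hzz : prodOf m d (wg.map ![z, c]) = m (m c z) c := by
      rw [hgv, nf2_11]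
      simp only [Matrix.cons_val_zero, Matrix.cons_val_one, Matrix.head_cons]
    rw [nf2_11]
    simp only [Matrix.cons_val_zero, Matrix.cons_val_one, Matrix.head_cons, hzz]
    have h5 : m z (m (m c z) c) = m z c := by
      rw [← assoc z (m c z) c, ← assoc z c z, habs]
    rw [h5]
    exact habs

end AuxBand2
section AuxBand3

variable {α : Type} (m : α → α → α)
variable (idem : ∀ a, m a a = a) (assoc : ∀ a b c, m (m a b) c = m a (m b c))

omit idem in
include assoc in
theorem lp_flatMap {I : Type} (d : α) :
    ∀ (L : List I) (F : I → List α) (z : α), (∀ i ∈ L, F i ≠ []) →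
      listProd m z (L.flatMap F) = listProd m z (L.map fun i => prodOf m d (F i))
  | [], _, _, _ => rfl
  | i :: L, F, z, h => by
      rw [List.flatMap_cons, lp_append m]
      have h1 : listProd m z (F i) = m z (prodOf m d (F i)) := by
        cases hFi : F i with
        | nil => exact absurd hFi (h i (by simp))
        | cons x l' => exact lp_mp m assoc l' z x
      rw [h1, List.map_cons]
      show listProd m (m z (prodOf m d (F i))) (L.flatMap F)
         = listProd m (m z (prodOf m d (F i))) (L.map fun i => prodOf m d (F i))
      exact lp_flatMap d L F _ (fun j hj => h j (by simp [hj]))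

omit idem in
include assoc in
theorem prodOf_flatMap {I : Type} (d : α) (L : List I) (F : I → List α)
    (hL : L ≠ []) (hF : ∀ i ∈ L, F i ≠ []) :
    prodOf m d (L.flatMap F) = prodOf m d (L.map fun i => prodOf m d (F i)) := by
  cases L with
  | nil => exact absurd rfl hL
  | cons i L' =>
    rw [List.flatMap_cons, List.map_cons]
    cases hFi : F i with
    | nil => exact absurd hFi (hF i (by simp))
    | cons x l' =>
      show listProd m x (l' ++ L'.flatMap F)
         = listProd m (listProd m x l') (L'.map fun i => prodOf m d (F i))
      rw [lp_append m]
      exact lp_flatMap m assoc d L' F _ (fun j hj => hF j (by simp [hj]))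

omit idem assoc in
theorem prodOf_ofFn (d : α) (n : ℕ) (hn : 0 < n) (v : Fin n → α) :
    prodOf m d (List.ofFn v) = listProd m (v ⟨0, hn⟩) (List.ofFn v).tail := by
  cases n with
  | zero => omega
  | succ k =>
    rw [List.ofFn_succ]
    rfl

end AuxBand3

theorem ofFn_if0 {γ : Type} (n : ℕ) (h2 : 2 ≤ n) (x y : γ) :
    List.ofFn (fun i : Fin n => if (i : ℕ) = 0 then x else y)
      = x :: List.replicate (n - 1) y := by
  cases n with
  | zero => omega
  | succ k =>
    rw [List.ofFn_succ]
    simp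

section BandEval

variable {S : Signature}

theorem band_eval (h0 : ∀ ω : S.symbols, 0 < S.arity ω) (A' : Alg S)
    (mul : A'.carrier → A'.carrier → A'.carrier)
    (idem : ∀ x, mul x x = x)
    (assoc : ∀ x y z, mul (mul x y) z = mul x (mul y z))
    (hop : ∀ (ω : S.symbols) (a : Fin (S.arity ω) → A'.carrier) (h : 0 < S.arity ω),
      A'.op ω a = listProd mul (a ⟨0, h⟩) (List.ofFn a).tail)
    {X : Type} (d : A'.carrier) :
    ∀ (t : Term S X) (e : X → A'.carrier),
      t.eval A' e = prodOf mul d (t.varList.map e)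
  | .var x, e => rfl
  | .app ω ts, e => by
      show A'.op ω (fun i => (ts i).eval A' e) = _
      rw [hop ω _ (h0 ω)]
      rw [← prodOf_ofFn mul d (S.arity ω) (h0 ω) (fun i => (ts i).eval A' e)]
      show _ = prodOf mul d (((List.finRange (S.arity ω)).flatMap fun i => (ts i).varList).map e)
      rw [List.map_flatMap]
      rw [prodOf_flatMap mul assoc d (List.finRange (S.arity ω))
        (fun i => (ts i).varList.map e)
        (by
          have hlen : (List.finRange (S.arity ω)).length = S.arity ω :=
            List.length_finRange
          have hpos := h0 ω
          intro hnil
          rw [hnil] at hlen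
          simp only [List.length_nil] at hlen
          omega)
        (by
          intro i _
          obtain ⟨x, hx⟩ := Term.varList_mem h0 (ts i)
          intro hnil
          rw [List.map_eq_nil_iff] at hnil
          rw [hnil] at hx
          simp at hx)]
      rw [List.ofFn_eq_map]
      congr 1
      refine List.map_congr_left fun i _ => ?_
      exact band_eval h0 A' mul idem assoc hop d (ts i) e

end BandEval
section AuxQuot

variable {S : Signature} {A : Alg S} (θ : Congruence A)

theorem quot_op (ω : S.symbols) (c : Fin (S.arity ω) → A.carrier) :
    (A.quot θ).op ω (fun i => Quotient.mk θ.setoid (c i))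
      = Quotient.mk θ.setoid (A.op ω c) := by
  show Quotient.mk θ.setoid (A.op ω fun i => (Quotient.mk θ.setoid (c i)).out) = _
  have hout : ∀ x : A.carrier, θ.rel (Quotient.mk θ.setoid x).out x :=
    fun x => @Quotient.mk_out _ θ.setoid x
  exact Quot.sound (θ.compat ω _ c fun i => hout (c i))

theorem quot_eval_mk {X : Type} :
    ∀ (t : Term S X) (e : X → A.carrier),
      t.eval (A.quot θ) (fun x => Quotient.mk θ.setoid (e x))
        = Quotient.mk θ.setoid (t.eval A e)
  | .var _, _ => rfl
  | .app ω ts, e => by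
      show (A.quot θ).op ω (fun i => (ts i).eval (A.quot θ) _) = _
      have h : (fun i => (ts i).eval (A.quot θ) fun x => Quotient.mk θ.setoid (e x))
          = fun i => Quotient.mk θ.setoid ((ts i).eval A e) :=
        funext fun i => quot_eval_mk (ts i) e
      rw [h, quot_op θ ω]
      rfl

theorem quot_eval_out {X : Type} (t : Term S X) (eh : X → (A.quot θ).carrier) :
    t.eval (A.quot θ) eh = Quotient.mk θ.setoid (t.eval A fun x => (eh x).out) := by
  have h : eh = fun x => Quotient.mk θ.setoid ((eh x).out) :=
    funext fun x => (Quotient.out_eq (eh x)).symm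
  conv_lhs => rw [h]
  exact quot_eval_mk θ t fun x => (eh x).out

theorem rel_of_conseqB {B : Set (Ident S)} (hq : (A.quot θ).Models B) {X : Type}
    {t s : Term S X} (hts : Conseq B t s) (e : X → A.carrier) :
    θ.rel (t.eval A e) (s.eval A e) := by
  have h := hts (A.quot θ) hq (fun x => Quotient.mk θ.setoid (e x))
  rw [quot_eval_mk, quot_eval_mk] at h
  exact Quotient.exact h

theorem op_idem_of_band (h0 : ∀ ω : S.symbols, 0 < S.arity ω) {C : Alg S}
    (hband : C.IsOmegaBand) (ω : S.symbols) (x : C.carrier) :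
    C.op ω (fun _ => x) = x := by
  obtain ⟨mul, idem, assoc, hop⟩ := hband
  rw [hop ω _ (h0 ω)]
  cases hT : (List.ofFn fun _ : Fin (S.arity ω) => x).tail with
  | nil => rfl
  | cons y l =>
    rw [← hT, lp_const mul idem assoc _ x x (by rw [hT]; simp)]
    · exact idem x
    · intro y' hy'
      have hmem := List.mem_ofFn.mp (List.mem_of_mem_tail hy')
      obtain ⟨i, hi⟩ := hmem
      exact hi.symm

theorem class_subuniv (h0 : ∀ ω : S.symbols, 0 < S.arity ω)
    {B : Set (Ident S)} (hB : ∀ A' : Alg S, A'.Models B → A'.IsOmegaBand)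
    (hq : (A.quot θ).Models B) (a : A.carrier) :
    A.IsSubuniverse {b | θ.rel a b} := by
  intro ω c hc
  have h1 : (fun i : Fin (S.arity ω) => Quotient.mk θ.setoid (c i))
      = fun _ : Fin (S.arity ω) => Quotient.mk θ.setoid a :=
    funext fun i => (Quot.sound (hc i)).symm
  have h2 := quot_op θ ω c
  rw [h1] at h2
  have h3 := op_idem_of_band h0 (hB (A.quot θ) hq) ω (Quotient.mk θ.setoid a)
  exact θ.iseqv.symm (Quotient.exact (h2.symm.trans h3))

end AuxQuot

section AuxSub

variable {S : Signature} {A : Alg S}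

theorem subalg_eval {Bs : Set A.carrier} (h : A.IsSubuniverse Bs) (hne : Bs.Nonempty)
    {X : Type} :
    ∀ (t : Term S X) (e : X → (A.subAlg Bs h hne).carrier),
      (t.eval (A.subAlg Bs h hne) e).1 = t.eval A fun x => (e x).1
  | .var _, _ => rfl
  | .app ω ts, e => by
      show (A.op ω fun i => ((ts i).eval (A.subAlg Bs h hne) e).1) = _
      exact congrArg _ (funext fun i => subalg_eval h hne (ts i) e)

theorem exists_code (A : Alg S) (L : List A.carrier) :
    ∃ (ρ : A.carrier → ℕ) (e : ℕ → A.carrier), ∀ x ∈ L, e (ρ x) = x := by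
  classical
  induction L with
  | nil =>
    obtain ⟨a⟩ := A.nonempty
    exact ⟨fun _ => 0, fun _ => a, by simp⟩
  | cons y L ih =>
    obtain ⟨ρ, e, he⟩ := ih
    refine ⟨fun x => if x = y then 0 else ρ x + 1,
      fun n => match n with | 0 => y | (k+1) => e k, ?_⟩
    intro x hx
    by_cases hxy : x = y
    · subst hxy
      show (fun n => match n with | 0 => x | (k+1) => e k)
        (if x = x then 0 else ρ x + 1) = x
      rw [if_pos rfl]
    · show (fun n => match n with | 0 => y | (k+1) => e k)
        (if x = y then 0 else ρ x + 1) = x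
      rw [if_neg hxy]
      exact he x (by
        rcases List.mem_cons.mp hx with h | h
        · exact absurd h hxy
        · exact h)

end AuxSub

section AuxMT

variable {S : Signature} {X : Type} (ω₀ : S.symbols) (hω₀ : 2 ≤ S.arity ω₀)

/-- binary product term built from a plural operation symbol -/
def MT (p q : Term S X) : Term S X :=
  .app ω₀ fun i => if (i : ℕ) = 0 then p else q

theorem mt_eval (A : Alg S) (p q : Term S X) (e : X → A.carrier) :
    (MT ω₀ p q).eval A e
      = A.op ω₀ fun i => if (i : ℕ) = 0 then p.eval A e else q.eval A e := by
  show A.op ω₀ _ = A.op ω₀ _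
  refine congrArg _ (funext fun i => ?_)
  show (if (i : ℕ) = 0 then p else q).eval A e = _
  by_cases hi : (i : ℕ) = 0
  · rw [if_pos hi, if_pos hi]
  · rw [if_neg hi, if_neg hi]

include hω₀ in
theorem mt_band (A' : Alg S)
    (mul : A'.carrier → A'.carrier → A'.carrier)
    (idem : ∀ x, mul x x = x)
    (assoc : ∀ x y z, mul (mul x y) z = mul x (mul y z))
    (hop : ∀ (ω : S.symbols) (a : Fin (S.arity ω) → A'.carrier) (h : 0 < S.arity ω),
      A'.op ω a = listProd mul (a ⟨0, h⟩) (List.ofFn a).tail)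
    (p q : Term S X) (e : X → A'.carrier) :
    (MT ω₀ p q).eval A' e = mul (p.eval A' e) (q.eval A' e) := by
  rw [mt_eval]
  rw [hop ω₀ _ (by omega)]
  rw [ofFn_if0 (S.arity ω₀) hω₀ (p.eval A' e) (q.eval A' e)]
  show listProd mul (if (0 : ℕ) = 0 then p.eval A' e else q.eval A' e)
    (List.replicate (S.arity ω₀ - 1) (q.eval A' e)) = _
  rw [if_pos rfl]
  rw [lp_const mul idem assoc _ _ (q.eval A' e)
    (by
      intro hnil
      have := congrArg List.length hnil
      simp only [List.length_replicate, List.length_nil] at this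
      omega)
    (fun y hy => List.eq_of_mem_replicate hy)]

include hω₀ in
theorem zband (A' : Alg S)
    (mul : A'.carrier → A'.carrier → A'.carrier)
    (idem : ∀ x, mul x x = x)
    (assoc : ∀ x y z, mul (mul x y) z = mul x (mul y z))
    (hop : ∀ (ω : S.symbols) (a : Fin (S.arity ω) → A'.carrier) (h : 0 < S.arity ω),
      A'.op ω a = listProd mul (a ⟨0, h⟩) (List.ofFn a).tail)
    (e : X → A'.carrier) :
    ∀ (l : List (Term S X)) (base : Term S X),
      (l.foldl (MT ω₀) base).eval A' e
        = listProd mul (base.eval A' e) (l.map fun t => t.eval A' e)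
  | [], base => rfl
  | t :: l, base => by
      rw [List.foldl_cons, zband A' mul idem assoc hop e l (MT ω₀ base t),
        mt_band ω₀ hω₀ A' mul idem assoc hop base t e]
      rfl

end AuxMT
section AuxPair

variable {S : Signature} {X : Type}

theorem pair_eval (A : Alg S) (P Q : Term S X) (e : X → A.carrier) :
    (fun i : Fin 2 => ((![P, Q] : Fin 2 → Term S X) i).eval A e)
      = ![P.eval A e, Q.eval A e] := by
  funext i
  rcases (by omega : i = 0 ∨ i = 1) with rfl | rfl
  · simp only [Matrix.cons_val_zero]
  · simp only [Matrix.cons_val_one, Matrix.head_cons, Matrix.cons_val_zero]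

theorem subst_pair_eval (A : Alg S) (h2 : Term S (Fin 2)) (P Q : Term S X)
    (e : X → A.carrier) :
    ((h2.subst ![P, Q]).eval A e) = h2.eval A ![P.eval A e, Q.eval A e] := by
  rw [Term.eval_subst, pair_eval]

end AuxPair
/-- Let `V` be a variety of a plural type `τ` and `B` a variety
of Ω-bands of the same type. Let `f(x,y)` and `g(x,y)` be binary terms, each
containing both variables, with the same first variable and the same last
variable. If `V ⊨ f(x,y) = x` and `V ⊨ g(x,y) = y`, then the Mal'tsev product
`V ∘ B` is a variety. -/
theorem stmt_17 (S : Signature) (h0 : ∀ ω : S.symbols, 0 < S.arity ω)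
    (hplural : ∃ ω : S.symbols, 2 ≤ S.arity ω)
    (V B : Set (Ident S))
    (hB : ∀ A : Alg S, A.Models B → A.IsOmegaBand)
    (f g : Term S (Fin 2))
    (hfx : (0 : Fin 2) ∈ f.varList) (hfy : (1 : Fin 2) ∈ f.varList)
    (hgx : (0 : Fin 2) ∈ g.varList) (hgy : (1 : Fin 2) ∈ g.varList)
    (hfirst : f.varList.head? = g.varList.head?)
    (hlast : f.varList.getLast? = g.varList.getLast?)
    (hf : Conseq V f (Term.var 0))
    (hg : Conseq V g (Term.var 1)) :
    IsVarietyClass (InMaltsev V B) := by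
  classical
  obtain ⟨ω₀, hω₀⟩ := hplural
  obtain ⟨xf, hxf⟩ := Term.varList_mem h0 f
  have hfne : f.varList ≠ [] := List.ne_nil_of_mem hxf
  obtain ⟨p, hpf⟩ : ∃ p, f.varList.head? = some p := by
    cases hl : f.varList with
    | nil => exact absurd hl hfne
    | cons a t => exact ⟨a, rfl⟩
  have hpg : g.varList.head? = some p := hfirst ▸ hpf
  obtain ⟨q, hqf⟩ : ∃ q, f.varList.getLast? = some q :=
    ⟨_, List.getLast?_eq_getLast hfne⟩
  have hqg : g.varList.getLast? = some q := hlast ▸ hqf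
  -- `f` and `g` agree on every Ω-band of `B`
  have hfg : Conseq B f g := by
    intro A' hA' env
    obtain ⟨mul, idem, assoc, hop⟩ := hB A' hA'
    obtain ⟨d⟩ := A'.nonempty
    rw [band_eval h0 A' mul idem assoc hop d f env,
        band_eval h0 A' mul idem assoc hop d g env,
        lemC mul idem assoc env d f.varList hfx hfy p q hpf hqf,
        lemC mul idem assoc env d g.varList hgx hgy p q hpg hqg]
  refine ⟨({e | ∃ t s : Term S ℕ, Conseq B t s ∧ e = (f.subst ![t, s], t)} ∪
          {e | ∃ t s : Term S ℕ, Conseq B t s ∧ e = (g.subst ![t, s], s)}) ∪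
          {e | ∃ (u v : Term S ℕ) (σ : ℕ → Term S ℕ), (u, v) ∈ V ∧
            (∀ i ∈ u.varList ++ v.varList, ∀ j ∈ u.varList ++ v.varList,
              Conseq B (σ i) (σ j)) ∧ e = (u.subst σ, v.subst σ)},
      fun A => ⟨?_, ?_⟩⟩
  · -- forward: a member of the Mal'tsev product satisfies all the identities
    rintro ⟨θ, hqB, hcl⟩
    have hsubu : ∀ a : A.carrier, A.IsSubuniverse {b | θ.rel a b} :=
      fun a => class_subuniv θ h0 hB hqB a
    have hF6f : ∀ c d' : A.carrier, θ.rel c d' → f.eval A ![c, d'] = c := by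
      intro c d' hcd
      have hmod := hcl c (hsubu c)
      have hsat := hf _ hmod ![⟨c, θ.iseqv.refl c⟩, ⟨d', hcd⟩]
      have h2 := congrArg Subtype.val hsat
      erw [subalg_eval] at h2
      have h3 : (fun i : Fin 2 =>
          ((![⟨c, θ.iseqv.refl c⟩, ⟨d', hcd⟩] :
            Fin 2 → (A.subAlg {b | θ.rel c b} (hsubu c) ⟨c, θ.iseqv.refl c⟩).carrier) i).1)
          = ![c, d'] := by
        funext i
        rcases (by omega : i = 0 ∨ i = 1) with rfl | rfl
        · rfl
        · rfl
      rw [h3] at h2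
      exact h2
    have hF6g : ∀ c d' : A.carrier, θ.rel c d' → g.eval A ![c, d'] = d' := by
      intro c d' hcd
      have hmod := hcl c (hsubu c)
      have hsat := hg _ hmod ![⟨c, θ.iseqv.refl c⟩, ⟨d', hcd⟩]
      have h2 := congrArg Subtype.val hsat
      erw [subalg_eval] at h2
      have h3 : (fun i : Fin 2 =>
          ((![⟨c, θ.iseqv.refl c⟩, ⟨d', hcd⟩] :
            Fin 2 → (A.subAlg {b | θ.rel c b} (hsubu c) ⟨c, θ.iseqv.refl c⟩).carrier) i).1)
          = ![c, d'] := by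
        funext i
        rcases (by omega : i = 0 ∨ i = 1) with rfl | rfl
        · rfl
        · rfl
      rw [h3] at h2
      exact h2
    intro e' he'
    rcases he' with (⟨t, s, hts, rfl⟩ | ⟨t, s, hts, rfl⟩) | ⟨u, v, σ, huv, hσ, rfl⟩
    · intro env
      show (f.subst ![t, s]).eval A env = t.eval A env
      rw [subst_pair_eval]
      exact hF6f _ _ (rel_of_conseqB θ hqB hts env)
    · intro env
      show (g.subst ![t, s]).eval A env = s.eval A env
      rw [subst_pair_eval]
      exact hF6g _ _ (rel_of_conseqB θ hqB hts env)
    · intro env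
      show (u.subst σ).eval A env = (v.subst σ).eval A env
      rw [Term.eval_subst, Term.eval_subst]
      obtain ⟨i₀, hi₀u⟩ := Term.varList_mem h0 u
      have hi₀ : i₀ ∈ u.varList ++ v.varList := List.mem_append_left _ hi₀u
      have hrel : ∀ n ∈ u.varList ++ v.varList,
          θ.rel ((σ i₀).eval A env) ((σ n).eval A env) := fun n hn =>
        rel_of_conseqB θ hqB (hσ i₀ hi₀ n hn) env
      have hmod := hcl ((σ i₀).eval A env) (hsubu _)
      set w0 : A.carrier := (σ i₀).eval A env with hw0
      have hsat := hmod (u, v) huv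
        (fun n => if hn : n ∈ u.varList ++ v.varList
          then ⟨(σ n).eval A env, hrel n hn⟩ else ⟨w0, θ.iseqv.refl w0⟩)
      have h2 := congrArg Subtype.val hsat
      erw [subalg_eval, subalg_eval] at h2
      have hu : u.eval A (fun n =>
          ((if hn : n ∈ u.varList ++ v.varList
            then (⟨(σ n).eval A env, hrel n hn⟩ :
              (A.subAlg {b | θ.rel w0 b} (hsubu w0) ⟨w0, θ.iseqv.refl w0⟩).carrier)
            else ⟨w0, θ.iseqv.refl w0⟩)).1)
          = u.eval A fun n => (σ n).eval A env := by
        refine Term.eval_congr A u fun n hn => ?_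
        rw [dif_pos (List.mem_append_left _ hn)]
      have hv : v.eval A (fun n =>
          ((if hn : n ∈ u.varList ++ v.varList
            then (⟨(σ n).eval A env, hrel n hn⟩ :
              (A.subAlg {b | θ.rel w0 b} (hsubu w0) ⟨w0, θ.iseqv.refl w0⟩).carrier)
            else ⟨w0, θ.iseqv.refl w0⟩)).1)
          = v.eval A fun n => (σ n).eval A env := by
        refine Term.eval_congr A v fun n hn => ?_
        rw [dif_pos (List.mem_append_right _ hn)]
      have h2 := hu.symm.trans (h2.trans hv)
      exact h2
  · -- backward: a model of the identities lies in the Mal'tsev product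
    intro hM
    have hEf : ∀ (t s : Term S ℕ), Conseq B t s → A.sat (f.subst ![t, s]) t :=
      fun t s hts => hM _ (Or.inl (Or.inl ⟨t, s, hts, rfl⟩))
    have hEg : ∀ (t s : Term S ℕ), Conseq B t s → A.sat (g.subst ![t, s]) s :=
      fun t s hts => hM _ (Or.inl (Or.inr ⟨t, s, hts, rfl⟩))
    have hE2 : ∀ (u v : Term S ℕ) (σ : ℕ → Term S ℕ), (u, v) ∈ V →
        (∀ i ∈ u.varList ++ v.varList, ∀ j ∈ u.varList ++ v.varList,
          Conseq B (σ i) (σ j)) →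
        A.sat (u.subst σ) (v.subst σ) :=
      fun u v σ huv hσ => hM _ (Or.inr ⟨u, v, σ, huv, hσ, rfl⟩)
    have L1f : ∀ (t s : Term S A.carrier), Conseq B t s →
        f.eval A ![t.eval A id, s.eval A id] = t.eval A id := by
      intro t s hts
      obtain ⟨ρ, ev, hev⟩ := exists_code A (t.varList ++ s.varList)
      have hren : Conseq B (t.subst fun x => Term.var (ρ x))
          (s.subst fun x => Term.var (ρ x)) :=
        conseq_subst hts fun x => fun A'' hA'' e' => rfl
      have h2 := hEf _ _ hren ev
      rw [subst_pair_eval] at h2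
      have ht' : (t.subst fun x => Term.var (ρ x)).eval A ev = t.eval A id := by
        rw [Term.eval_subst]
        exact Term.eval_congr A t fun x hx => hev x (List.mem_append_left _ hx)
      have hs' : (s.subst fun x => Term.var (ρ x)).eval A ev = s.eval A id := by
        rw [Term.eval_subst]
        exact Term.eval_congr A s fun x hx => hev x (List.mem_append_right _ hx)
      rw [ht', hs'] at h2
      exact h2
    have L1g : ∀ (t s : Term S A.carrier), Conseq B t s →
        g.eval A ![t.eval A id, s.eval A id] = s.eval A id := by
      intro t s hts
      obtain ⟨ρ, ev, hev⟩ := exists_code A (t.varList ++ s.varList)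
      have hren : Conseq B (t.subst fun x => Term.var (ρ x))
          (s.subst fun x => Term.var (ρ x)) :=
        conseq_subst hts fun x => fun A'' hA'' e' => rfl
      have h2 := hEg _ _ hren ev
      rw [subst_pair_eval] at h2
      have ht' : (t.subst fun x => Term.var (ρ x)).eval A ev = t.eval A id := by
        rw [Term.eval_subst]
        exact Term.eval_congr A t fun x hx => hev x (List.mem_append_left _ hx)
      have hs' : (s.subst fun x => Term.var (ρ x)).eval A ev = s.eval A id := by
        rw [Term.eval_subst]
        exact Term.eval_congr A s fun x hx => hev x (List.mem_append_right _ hx)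
      rw [ht', hs'] at h2
      exact h2
    set relR : A.carrier → A.carrier → Prop := fun a b =>
      ∃ t s : Term S A.carrier, Conseq B t s ∧ t.eval A id = a ∧ s.eval A id = b
      with hrelR
    have hrefl : ∀ a, relR a a := fun a =>
      ⟨Term.var a, Term.var a, fun _ _ _ => rfl, rfl, rfl⟩
    have hsymm : ∀ {a b}, relR a b → relR b a := by
      rintro a b ⟨t, s, hts, h1, h2⟩
      exact ⟨s, t, conseq_symm hts, h2, h1⟩
    have L1f' : ∀ {a b}, relR a b → f.eval A ![a, b] = a := by
      rintro a b ⟨t, s, hts, rfl, rfl⟩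
      exact L1f t s hts
    have L1g' : ∀ {a b}, relR a b → g.eval A ![a, b] = b := by
      rintro a b ⟨t, s, hts, rfl, rfl⟩
      exact L1g t s hts
    have htrans : ∀ {a b c}, relR a b → relR b c → relR a c := by
      rintro a b c ⟨t, s, hts, rfl, hs⟩ ⟨t', s', hts', ht', rfl⟩
      refine ⟨f.subst ![t, t'], g.subst ![s, s'], ?_, ?_, ?_⟩
      · intro A'' hA'' e'
        rw [subst_pair_eval, subst_pair_eval]
        rw [hts A'' hA'' e', hts' A'' hA'' e']
        exact hfg A'' hA'' _
      · rw [subst_pair_eval, ht', ← hs]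
        exact L1f t s hts
      · rw [subst_pair_eval, hs, ← ht']
        exact L1g t' s' hts'
    have hcompat : ∀ ω (a b : Fin (S.arity ω) → A.carrier),
        (∀ i, relR (a i) (b i)) → relR (A.op ω a) (A.op ω b) := by
      intro ω a b hab
      choose T Sg h1 h2 h3 using hab
      refine ⟨Term.app ω T, Term.app ω Sg, ?_, ?_, ?_⟩
      · intro A'' hA'' e'
        show A''.op ω _ = A''.op ω _
        exact congrArg _ (funext fun i => h1 i A'' hA'' e')
      · show A.op ω (fun i => (T i).eval A id) = A.op ω a
        exact congrArg _ (funext h2)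
      · show A.op ω (fun i => (Sg i).eval A id) = A.op ω b
        exact congrArg _ (funext h3)
    refine ⟨⟨relR, ⟨hrefl, hsymm, htrans⟩, hcompat⟩, ?_, ?_⟩
    · -- the quotient is in B
      set θ : Congruence A := ⟨relR, ⟨hrefl, hsymm, htrans⟩, hcompat⟩ with hθ
      intro e' he' env
      obtain ⟨u, v⟩ := e'
      show u.eval (A.quot θ) env = v.eval (A.quot θ) env
      rw [quot_eval_out θ u env, quot_eval_out θ v env]
      apply Quot.sound
      refine ⟨u.subst fun n => Term.var ((env n).out),
              v.subst fun n => Term.var ((env n).out), ?_, ?_, ?_⟩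
      · exact conseq_subst (fun A'' hA'' e'' => hA'' (u, v) he' e'')
          fun n => fun A'' hA'' e'' => rfl
      · rw [Term.eval_subst]; rfl
      · rw [Term.eval_subst]; rfl
    · -- the classes are in V
      set θ : Congruence A := ⟨relR, ⟨hrefl, hsymm, htrans⟩, hcompat⟩ with hθ
      intro a h e' he' env
      obtain ⟨u, v⟩ := e'
      show (u.eval (A.subAlg {b | θ.rel a b} h ⟨a, θ.iseqv.refl a⟩) env)
          = v.eval (A.subAlg {b | θ.rel a b} h ⟨a, θ.iseqv.refl a⟩) env
      apply Subtype.ext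
      erw [subalg_eval, subalg_eval]
      set bv : ℕ → A.carrier := fun n => (env n).1 with hbv
      have hbvC : ∀ n, relR a (bv n) := fun n => (env n).2
      set R : List ℕ := u.varList ++ v.varList with hR
      set Zt : Term S A.carrier :=
        (R.map fun n => Term.var (bv n)).foldl (MT ω₀) (Term.var a) with hZ
      have hZC : relR a (Zt.eval A id) := by
        have hgen : ∀ (l : List (Term S A.carrier)) (base : Term S A.carrier),
            relR a (base.eval A id) → (∀ t' ∈ l, relR a (t'.eval A id)) →
            relR a ((l.foldl (MT ω₀) base).eval A id) := by
          intro l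
          induction l with
          | nil => intro base hb _; exact hb
          | cons t' l ih =>
            intro base hb hl
            rw [List.foldl_cons]
            refine ih (MT ω₀ base t') ?_ fun t'' h'' => hl t'' (by simp [h''])
            rw [mt_eval]
            refine h ω₀ _ fun i => ?_
            show relR a _
            by_cases hi : (i : ℕ) = 0
            · rw [if_pos hi]; exact hb
            · rw [if_neg hi]; exact hl t' (by simp)
        refine hgen _ _ (hrefl a) ?_
        intro t' ht'
        obtain ⟨n, hn, rfl⟩ := List.mem_map.mp ht'
        exact hbvC n
      have hzbn : ∀ n, relR (Zt.eval A id) (bv n) := fun n =>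
        htrans (hsymm hZC) (hbvC n)
      set σh : ℕ → Term S A.carrier :=
        fun n => f.subst ![g.subst ![Zt, Term.var (bv n)], Zt] with hσh
      have hσval : ∀ n, (σh n).eval A id = bv n := by
        intro n
        show (f.subst ![g.subst ![Zt, Term.var (bv n)], Zt]).eval A id = bv n
        rw [subst_pair_eval]
        have hginner : (g.subst ![Zt, Term.var (bv n)]).eval A id = bv n := by
          rw [subst_pair_eval]
          exact L1g' (hzbn n)
        rw [hginner]
        exact L1f' (hsymm (hzbn n))
      have hval : ∀ n ∈ R, ∀ (A' : Alg S), A'.Models B → ∀ e' : A.carrier → A'.carrier,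
          (σh n).eval A' e' = Zt.eval A' e' := by
        intro n hn A' hA' e'
        obtain ⟨mul, idem, assoc, hop⟩ := hB A' hA'
        obtain ⟨d⟩ := A'.nonempty
        have hz' : Zt.eval A' e' = listProd mul (e' a) (R.map fun k => e' (bv k)) := by
          rw [hZ, zband ω₀ hω₀ A' mul idem assoc hop e']
          rw [List.map_map]
          rfl
        have habs : mul (mul (Zt.eval A' e') (e' (bv n))) (Zt.eval A' e')
            = Zt.eval A' e' := by
          rw [hz']
          exact absorb_factor mul idem assoc _ _ _
            (Or.inr (List.mem_map.mpr ⟨n, hn, rfl⟩))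
        show (f.subst ![g.subst ![Zt, Term.var (bv n)], Zt]).eval A' e' = _
        rw [subst_pair_eval]
        have hgv : (g.subst ![Zt, Term.var (bv n)]).eval A' e'
            = prodOf mul d (g.varList.map ![Zt.eval A' e', e' (bv n)]) := by
          rw [subst_pair_eval]
          exact band_eval h0 A' mul idem assoc hop d g _
        rw [hgv]
        rw [band_eval h0 A' mul idem assoc hop d f]
        exact keyband mul idem assoc (Zt.eval A' e') (e' (bv n)) habs
          f.varList g.varList hfx hfy hgx hgy p q hpf hpg hqf hqg d
      have hpair : ∀ i ∈ R, ∀ j ∈ R, Conseq B (σh i) (σh j) := by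
        intro i hi j hj A' hA' e'
        rw [hval i hi A' hA' e', hval j hj A' hA' e']
      have hid : u.eval A (fun n => (σh n).eval A id)
          = v.eval A fun n => (σh n).eval A id := by
        obtain ⟨ρ, ev, hev⟩ := exists_code A (R.flatMap fun n => (σh n).varList)
        have h2 := hE2 u v (fun n => (σh n).subst fun x => Term.var (ρ x)) he'
          (fun i hi j hj => conseq_subst (hpair i hi j hj)
            fun x => fun A'' hA'' e'' => rfl) ev
        rw [Term.eval_subst, Term.eval_subst] at h2
        have hu : u.eval A (fun n =>
            ((σh n).subst fun x => Term.var (ρ x)).eval A ev)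
            = u.eval A fun n => (σh n).eval A id := by
          refine Term.eval_congr A u fun n hn => ?_
          rw [Term.eval_subst]
          refine Term.eval_congr A (σh n) fun x hx => ?_
          exact hev x (List.mem_flatMap.mpr ⟨n, List.mem_append_left _ hn, hx⟩)
        have hv : v.eval A (fun n =>
            ((σh n).subst fun x => Term.var (ρ x)).eval A ev)
            = v.eval A fun n => (σh n).eval A id := by
          refine Term.eval_congr A v fun n hn => ?_
          rw [Term.eval_subst]
          refine Term.eval_congr A (σh n) fun x hx => ?_
          exact hev x (List.mem_flatMap.mpr ⟨n, List.mem_append_right _ hn, hx⟩)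
        rw [hu, hv] at h2
        exact h2
      have hfin : (fun n => (σh n).eval A id) = bv := funext hσval
      rw [hfin] at hid
      exact hid
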